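/- On R^4, define P with nonzero entries P^{12} = p12, P^{34} = p34 and P' with nonzero entries P'^{12} = a21 x1 + a22 x2, P'^{34} = a73 x3 + a74 x4 (real constants). Then P, P' are compatible Poisson structures, and for p12 p34 ≠ 0 the functions H1 = (a21 x1 + a22 x2)/p12 + (a73 x3 + a74 x4)/p34 and H2 = (1/2)(((a21 x1 + a22 x2)/p12)^2 + ((a73 x3 + a74 x4)/p34)^2) are in bi-involution: {H1,H2} = {H1,H2}' = 0. -/

import Mathlib

open scoped BigOperators

noncomputable def pd {m : ℕ} (μ : Fin m) (f : (Fin m → ℝ) → ℝ) (x : Fin m → ℝ) : ℝ :=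
  fderiv ℝ f x (Pi.single μ 1)

/-- Poisson bracket associated to a bivector field `P`. -/
noncomputable def pbrk {m : ℕ} (P : (Fin m → ℝ) → Fin m → Fin m → ℝ)
    (f g : (Fin m → ℝ) → ℝ) (x : Fin m → ℝ) : ℝ :=
  ∑ μ, ∑ ν, P x μ ν * pd μ f x * pd ν g x

/-- Schouten bracket `[P,P]^{λμν}`. -/
noncomputable def schouten {m : ℕ} (P : (Fin m → ℝ) → Fin m → Fin m → ℝ)
    (l μ ν : Fin m) (x : Fin m → ℝ) : ℝ :=
  ∑ ρ, (P x ρ l * pd ρ (fun y => P y μ ν) x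
      + P x ρ ν * pd ρ (fun y => P y l μ) x
      + P x ρ μ * pd ρ (fun y => P y ν l) x)

/-- Mixed Schouten bracket `[P,Q]^{λμν}`. -/
noncomputable def schoutenMixed {m : ℕ} (P Q : (Fin m → ℝ) → Fin m → Fin m → ℝ)
    (l μ ν : Fin m) (x : Fin m → ℝ) : ℝ :=
  ∑ ρ, (P x ρ l * pd ρ (fun y => Q y μ ν) x + Q x ρ l * pd ρ (fun y => P y μ ν) x
      + P x ρ ν * pd ρ (fun y => Q y l μ) x + Q x ρ ν * pd ρ (fun y => P y l μ) x
      + P x ρ μ * pd ρ (fun y => Q y ν l) x + Q x ρ μ * pd ρ (fun y => P y ν l) x)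

/-- The Poisson bivector `P` on the group `VII_0 ⊕ R`. -/
noncomputable def PVII (p12 p34 : ℝ) : (Fin 4 → ℝ) → Fin 4 → Fin 4 → ℝ :=
  fun _ μ ν =>
    !![0, p12, 0, 0;
       -p12, 0, 0, 0;
       0, 0, 0, p34;
       0, 0, -p34, 0] μ ν

/-- The Poisson bivector `P'` on the group `VII_0 ⊕ R`. -/
noncomputable def PVII' (a21 a22 a73 a74 : ℝ) : (Fin 4 → ℝ) → Fin 4 → Fin 4 → ℝ :=
  fun x μ ν =>
    let A := a21 * x 0 + a22 * x 1
    let B := a73 * x 2 + a74 * x 3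
    !![0, A, 0, 0;
       -A, 0, 0, 0;
       0, 0, 0, B;
       0, 0, -B, 0] μ ν


section VII0Helpers

lemma pd_const {m : ℕ} (c : ℝ) (ρ : Fin m) (x : Fin m → ℝ) :
    pd ρ (fun _ => c) x = 0 := by simp [pd]

lemma hasfd_aff {m : ℕ} (a b : ℝ) (i j : Fin m) (x : Fin m → ℝ) :
    HasFDerivAt (fun y : Fin m → ℝ => a * y i + b * y j)
      (a • (ContinuousLinearMap.proj (R := ℝ) (φ := fun _ : Fin m => ℝ) i)
        + b • (ContinuousLinearMap.proj (R := ℝ) (φ := fun _ : Fin m => ℝ) j)) x := by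
  exact ((ContinuousLinearMap.proj (R := ℝ) (φ := fun _ : Fin m => ℝ)
      i).hasFDerivAt.const_mul a).add
    ((ContinuousLinearMap.proj (R := ℝ) (φ := fun _ : Fin m => ℝ) j).hasFDerivAt.const_mul b)

lemma pd_aff {m : ℕ} (a b : ℝ) (i j ρ : Fin m) (x : Fin m → ℝ) :
    pd ρ (fun y => a * y i + b * y j) x
      = a * (Pi.single ρ 1 : Fin m → ℝ) i + b * (Pi.single ρ 1 : Fin m → ℝ) j := by
  rw [pd, (hasfd_aff a b i j x).fderiv]; simp

lemma pd_aff_neg {m : ℕ} (a b : ℝ) (i j ρ : Fin m) (x : Fin m → ℝ) :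
    pd ρ (fun y => -(a * y i + b * y j)) x
      = -(a * (Pi.single ρ 1 : Fin m → ℝ) i + b * (Pi.single ρ 1 : Fin m → ℝ) j) := by
  rw [pd, ((hasfd_aff a b i j x).fun_neg).fderiv]; simp

lemma pd_neg_add {m : ℕ} (a b : ℝ) (i j ρ : Fin m) (x : Fin m → ℝ) :
    pd ρ (fun y => -(a * y i) + -(b * y j)) x
      = -(a * (Pi.single ρ 1 : Fin m → ℝ) i) + -(b * (Pi.single ρ 1 : Fin m → ℝ) j) := by
  have e : (fun y : Fin m → ℝ => -(a * y i) + -(b * y j))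
      = fun y => (-a) * y i + (-b) * y j := by funext y; ring
  rw [e, pd_aff]; ring

lemma pd_neg_sub {m : ℕ} (a b : ℝ) (i j ρ : Fin m) (x : Fin m → ℝ) :
    pd ρ (fun y => -(a * y i) - b * y j) x
      = -(a * (Pi.single ρ 1 : Fin m → ℝ) i) - b * (Pi.single ρ 1 : Fin m → ℝ) j := by
  have e : (fun y : Fin m → ℝ => -(a * y i) - b * y j)
      = fun y => (-a) * y i + (-b) * y j := by funext y; ring
  rw [e, pd_aff]; ring

lemma pd_aff4 (a b c d : ℝ) (ρ : Fin 4) (x : Fin 4 → ℝ) :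
    pd ρ (fun y => (a * y 0 + b * y 1) + (c * y 2 + d * y 3)) x
      = (a * (Pi.single ρ 1 : Fin 4 → ℝ) 0 + b * (Pi.single ρ 1 : Fin 4 → ℝ) 1)
        + (c * (Pi.single ρ 1 : Fin 4 → ℝ) 2 + d * (Pi.single ρ 1 : Fin 4 → ℝ) 3) := by
  rw [pd, ((hasfd_aff a b 0 1 x).fun_add (hasfd_aff c d 2 3 x)).fderiv]; simp

lemma pd_quad (a b c d : ℝ) (ρ : Fin 4) (x : Fin 4 → ℝ) :
    pd ρ (fun y => (1/2 : ℝ) * ((a * y 0 + b * y 1)^2 + (c * y 2 + d * y 3)^2)) x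
      = (a * x 0 + b * x 1)
          * (a * (Pi.single ρ 1 : Fin 4 → ℝ) 0 + b * (Pi.single ρ 1 : Fin 4 → ℝ) 1)
        + (c * x 2 + d * x 3)
          * (c * (Pi.single ρ 1 : Fin 4 → ℝ) 2 + d * (Pi.single ρ 1 : Fin 4 → ℝ) 3) := by
  have e : (fun y : Fin 4 → ℝ => (1/2 : ℝ) * ((a * y 0 + b * y 1)^2 + (c * y 2 + d * y 3)^2))
      = fun y => (1/2 : ℝ) * ((a * y 0 + b * y 1) * (a * y 0 + b * y 1)
          + (c * y 2 + d * y 3) * (c * y 2 + d * y 3)) := by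
    funext y; ring
  rw [pd, e, ((((hasfd_aff a b 0 1 x).fun_mul (hasfd_aff a b 0 1 x)).fun_add
      ((hasfd_aff c d 2 3 x).fun_mul (hasfd_aff c d 2 3 x))).const_mul (1/2 : ℝ)).fderiv]
  simp; ring

end VII0Helpers

set_option maxHeartbeats 4000000

theorem VII0R_compatible_and_involution (p12 p34 a21 a22 a73 a74 : ℝ) :
    ((∀ x l μ ν, schouten (PVII p12 p34) l μ ν x = 0) ∧
     (∀ x l μ ν, schouten (PVII' a21 a22 a73 a74) l μ ν x = 0) ∧
     (∀ x l μ ν, schoutenMixed (PVII p12 p34) (PVII' a21 a22 a73 a74) l μ ν x = 0)) ∧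
    (p12 * p34 ≠ 0 →
      let H1 : (Fin 4 → ℝ) → ℝ := fun x =>
        (a21 * x 0 + a22 * x 1) / p12 + (a73 * x 2 + a74 * x 3) / p34
      let H2 : (Fin 4 → ℝ) → ℝ := fun x =>
        (1 / 2) * (((a21 * x 0 + a22 * x 1) / p12) ^ 2
          + ((a73 * x 2 + a74 * x 3) / p34) ^ 2)
      (∀ x, pbrk (PVII p12 p34) H1 H2 x = 0) ∧
      (∀ x, pbrk (PVII' a21 a22 a73 a74) H1 H2 x = 0)) := by
  refine ⟨⟨?_, ?_, ?_⟩, ?_⟩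
  · intro x l μ ν
    simp [schouten, PVII, pd_const]
  · intro x l μ ν
    fin_cases l <;> fin_cases μ <;> fin_cases ν <;>
      simp [schouten, Fin.sum_univ_four, PVII', pd_aff, pd_aff_neg, pd_neg_add,
        pd_neg_sub, pd_const, Pi.single_apply, Matrix.vecHead, Matrix.vecTail]
  · intro x l μ ν
    fin_cases l <;> fin_cases μ <;> fin_cases ν <;>
      simp [schoutenMixed, Fin.sum_univ_four, PVII, PVII', pd_aff, pd_aff_neg,
        pd_neg_add, pd_neg_sub, pd_const, Pi.single_apply, Matrix.vecHead,
        Matrix.vecTail]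
  · intro h H1 H2
    have hp12 : p12 ≠ 0 := fun h' => h (by simp [h'])
    have hp34 : p34 ≠ 0 := fun h' => h (by simp [h'])
    have e1 : H1 = fun y => (a21/p12 * y 0 + a22/p12 * y 1)
        + (a73/p34 * y 2 + a74/p34 * y 3) := by
      funext y; show _ / _ + _ / _ = _; ring
    have e2 : H2 = fun y => (1/2 : ℝ) * ((a21/p12 * y 0 + a22/p12 * y 1)^2
        + (a73/p34 * y 2 + a74/p34 * y 3)^2) := by
      funext y; show (1/2 : ℝ) * _ = _; ring
    constructor
    · intro x
      rw [pbrk]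
      simp only [e1, e2, pd_aff4, pd_quad]
      simp [Fin.sum_univ_four, PVII, Pi.single_apply, Matrix.vecHead, Matrix.vecTail]
      ring
    · intro x
      rw [pbrk]
      simp only [e1, e2, pd_aff4, pd_quad]
      simp [Fin.sum_univ_four, PVII', Pi.single_apply, Matrix.vecHead, Matrix.vecTail]
      ring
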